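/- arXiv:2508.04521 — 2 statements merged into one kernel-verified Lean document; each statement's English description precedes it below -/
import Mathlib

section
/- For any c ∈ ℝ, the orbit of the vector (1,0) under the dual action h ↦ h⁻ᵀ of the shearlet group H_sh^c on ℝ² equals ℝ* × ℝ = { (x,y) : x ≠ 0 }. -/
open Matrix

theorem shearlet_dual_orbit (c : ℝ) :
    {w : Fin 2 → ℝ | ∃ h : GL (Fin 2) ℝ,
        (∃ (a b ε : ℝ), a > 0 ∧ (ε = 1 ∨ ε = -1) ∧
          (h : Matrix (Fin 2) (Fin 2) ℝ) = ε • !![a, b; 0, a ^ c]) ∧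
        (↑(h⁻¹) : Matrix (Fin 2) (Fin 2) ℝ)ᵀ *ᵥ ![1, 0] = w}
      = {w : Fin 2 → ℝ | w 0 ≠ 0} := by
  ext w
  simp only [Set.mem_setOf_eq]
  constructor
  · rintro ⟨h, ⟨a, b, ε, ha, hε, hmat⟩, rfl⟩
    have key : ((h : Matrix (Fin 2) (Fin 2) ℝ))ᵀ *ᵥ
        ((↑(h⁻¹) : Matrix (Fin 2) (Fin 2) ℝ)ᵀ *ᵥ ![1, 0]) = ![1, 0] := by
      rw [mulVec_mulVec, ← transpose_mul]
      rw [h.inv_mul, transpose_one, one_mulVec]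
    set v := (↑(h⁻¹) : Matrix (Fin 2) (Fin 2) ℝ)ᵀ *ᵥ ![1, 0] with hv
    have h0 : ((h : Matrix (Fin 2) (Fin 2) ℝ)ᵀ *ᵥ v) 0 = 1 := by rw [key]; rfl
    rw [hmat] at h0
    simp [mulVec, transpose, Fin.sum_univ_two, dotProduct] at h0
    intro hv0
    rw [hv0] at h0
    simp at h0
  · intro hw
    set ε : ℝ := if 0 < w 0 then 1 else -1 with hεdef
    have hε : ε = 1 ∨ ε = -1 := by unfold ε; split <;> simp
    have hεw : ε * w 0 > 0 := by
      unfold ε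
      rcases lt_or_gt_of_ne hw with h | h
      · rw [if_neg (not_lt.mpr h.le)]; linarith
      · rw [if_pos h]; linarith
    have hε2 : ε * ε = 1 := by rcases hε with h | h <;> rw [h] <;> ring
    set a : ℝ := ε / w 0 with hadef
    have ha : a > 0 := by
      have := hεw
      unfold a
      rcases lt_or_gt_of_ne hw with h | h
      · have : ε < 0 := by nlinarith
        exact div_pos_of_neg_of_neg this h
      · have : ε > 0 := by nlinarith
        exact div_pos this h
    have haw : ε * (a * w 0) = 1 := by
      unfold a
      field_simp
      nlinarith [hε2]
    set b : ℝ := -(a ^ c * w 1) / w 0 with hbdef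
    set M : Matrix (Fin 2) (Fin 2) ℝ := ε • !![a, b; 0, a ^ c] with hM
    have hac : a ^ c > 0 := Real.rpow_pos_of_pos ha c
    have hdet : M.det ≠ 0 := by
      rw [hM, det_smul, det_fin_two_of]
      simp only [Fintype.card_fin, mul_zero, sub_zero]
      have hε2' : ε ^ 2 = 1 := by rcases hε with h | h <;> rw [h] <;> ring
      rw [hε2', one_mul]
      positivity
    refine ⟨Matrix.GeneralLinearGroup.mkOfDetNeZero M hdet, ⟨a, b, ε, ha, hε, rfl⟩, ?_⟩
    set h := Matrix.GeneralLinearGroup.mkOfDetNeZero M hdet with hh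
    have hcoe : (h : Matrix (Fin 2) (Fin 2) ℝ) = M := rfl
    have key : (h : Matrix (Fin 2) (Fin 2) ℝ)ᵀ *ᵥ w = ![1, 0] := by
      rw [hcoe, hM]
      ext i
      fin_cases i <;>
        simp [mulVec, transpose, Fin.sum_univ_two, dotProduct, smul_eq_mul]
      · linarith [haw]
      · unfold b
        field_simp
        ring
    calc (↑(h⁻¹) : Matrix (Fin 2) (Fin 2) ℝ)ᵀ *ᵥ ![1, 0]
        = (↑(h⁻¹) : Matrix (Fin 2) (Fin 2) ℝ)ᵀ *ᵥ ((h : Matrix (Fin 2) (Fin 2) ℝ)ᵀ *ᵥ w) := by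
          rw [key]
      _ = ((h : Matrix (Fin 2) (Fin 2) ℝ) * (↑(h⁻¹) : Matrix (Fin 2) (Fin 2) ℝ))ᵀ *ᵥ w := by
          rw [mulVec_mulVec, ← transpose_mul]
      _ = w := by
          rw [h.mul_inv, transpose_one, one_mulVec]
end

section
/- For every c ∈ ℝ, every invertible upper triangular matrix normalizes the shearlet group H_sh^c: if A = [[r,s],[0,t]] with rt ≠ 0, then A H_sh^c A⁻¹ = H_sh^c. -/
open Matrix

lemma shearlet_inv_upper (A : GL (Fin 2) ℝ) {r s t : ℝ} (hrt : r * t ≠ 0)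
    (hAe : (A : Matrix (Fin 2) (Fin 2) ℝ) = !![r, s; 0, t]) :
    ((A⁻¹ : GL (Fin 2) ℝ) : Matrix (Fin 2) (Fin 2) ℝ) = !![1/r, -s/(r*t); 0, 1/t] := by
  have hr : r ≠ 0 := left_ne_zero_of_mul hrt
  have ht : t ≠ 0 := right_ne_zero_of_mul hrt
  apply Units.inv_eq_of_mul_eq_one_right
  rw [hAe]
  ext i j
  fin_cases i <;> fin_cases j <;>
    simp [Matrix.mul_apply, Fin.sum_univ_two] <;> field_simp <;> ring

lemma shearlet_conj_subset (c : ℝ) (A : GL (Fin 2) ℝ)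
    (hA : ∃ r s t : ℝ, r * t ≠ 0 ∧ (A : Matrix (Fin 2) (Fin 2) ℝ) = !![r, s; 0, t]) :
    (fun h => A * h * A⁻¹) ''
        {h : GL (Fin 2) ℝ | ∃ (a b ε : ℝ), a > 0 ∧ (ε = 1 ∨ ε = -1) ∧
          (h : Matrix (Fin 2) (Fin 2) ℝ) = ε • !![a, b; 0, a ^ c]}
      ⊆ {h : GL (Fin 2) ℝ | ∃ (a b ε : ℝ), a > 0 ∧ (ε = 1 ∨ ε = -1) ∧
          (h : Matrix (Fin 2) (Fin 2) ℝ) = ε • !![a, b; 0, a ^ c]} := by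
  rintro _ ⟨h, ⟨a, b, ε, ha, hε, hh⟩, rfl⟩
  obtain ⟨r, s, t, hrt, hAe⟩ := hA
  have hr : r ≠ 0 := left_ne_zero_of_mul hrt
  have ht : t ≠ 0 := right_ne_zero_of_mul hrt
  have hAinv := shearlet_inv_upper A hrt hAe
  refine ⟨a, (r*b + s*a^c - s*a)/t, ε, ha, hε, ?_⟩
  show ((A * h * A⁻¹ : GL (Fin 2) ℝ) : Matrix (Fin 2) (Fin 2) ℝ) = _
  rw [Units.val_mul, Units.val_mul, hh, hAe, hAinv]
  ext i j
  fin_cases i <;> fin_cases j <;>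
    simp [Matrix.mul_apply, Fin.sum_univ_two] <;> field_simp <;> ring

theorem upper_triangular_normalizes_shearlet (c : ℝ) (A : GL (Fin 2) ℝ)
    (hA : ∃ r s t : ℝ, r * t ≠ 0 ∧ (A : Matrix (Fin 2) (Fin 2) ℝ) = !![r, s; 0, t]) :
    (fun h => A * h * A⁻¹) ''
        {h : GL (Fin 2) ℝ | ∃ (a b ε : ℝ), a > 0 ∧ (ε = 1 ∨ ε = -1) ∧
          (h : Matrix (Fin 2) (Fin 2) ℝ) = ε • !![a, b; 0, a ^ c]}
      = {h : GL (Fin 2) ℝ | ∃ (a b ε : ℝ), a > 0 ∧ (ε = 1 ∨ ε = -1) ∧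
          (h : Matrix (Fin 2) (Fin 2) ℝ) = ε • !![a, b; 0, a ^ c]} := by
  obtain ⟨r, s, t, hrt, hAe⟩ := hA
  have hr : r ≠ 0 := left_ne_zero_of_mul hrt
  have ht : t ≠ 0 := right_ne_zero_of_mul hrt
  have hAinv := shearlet_inv_upper A hrt hAe
  apply Set.Subset.antisymm
  · exact shearlet_conj_subset c A ⟨r, s, t, hrt, hAe⟩
  · intro h hh
    refine ⟨A⁻¹ * h * A, ?_, ?_⟩
    · have := shearlet_conj_subset c A⁻¹
        ⟨1/r, -s/(r*t), 1/t, by field_simp; exact one_div_ne_zero hrt, hAinv⟩ ⟨h, hh, rfl⟩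
      simpa using this
    · simp [mul_assoc]
end
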